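/- Let (X, {R_0,...,R_d}) be a symmetric association scheme and let Γ = (X, R_1) be connected with valency v_1 = p_{11}^0. Suppose Γ has diameter two, and let t be a positive integer with |X| > v_1(t−1)+2 and t ≠ v_1. Then Γ has vertex connectivity at least t+1; that is, every disconnecting set for Γ has size at least t+1. -/

import Mathlib

/-- A symmetric association scheme with `d` classes on a finite vertex set `X`:
a partition of `X × X` into nonempty symmetric relations `R 0, …, R d`, where
`R 0` is the identity relation, together with intersection numbers `p i j k`. -/
structure SymAssocScheme (X : Type*) [Fintype X] (d : ℕ) where
  R : Fin (d + 1) → X → X → Prop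
  R_nonempty : ∀ i, ∃ a b, R i a b
  R_symm : ∀ i a b, R i a b → R i b a
  R_zero : ∀ a b, R 0 a b ↔ a = b
  R_unique : ∀ a b, ∃! i, R i a b
  p : Fin (d + 1) → Fin (d + 1) → Fin (d + 1) → ℕ
  p_spec : ∀ (i j k : Fin (d + 1)) (a b : X), R k a b →
    {c : X | R i a c ∧ R j c b}.ncard = p i j k

namespace SymAssocScheme

variable {X : Type*} [Fintype X] {d : ℕ}

/-- The (simple) graph `Γ = (X, R_i)` of the basis relation `R_i`. -/
def graph (A : SymAssocScheme X d) (i : Fin (d + 1)) : SimpleGraph X where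
  Adj a b := a ≠ b ∧ A.R i a b
  symm := ⟨fun a b h => ⟨h.1.symm, A.R_symm i a b h.2⟩⟩
  loopless := ⟨fun a h => h.1 rfl⟩

/-- The unweighted distribution diagram `H_i` (with loops discarded):
`j ~ k` iff `p i j k + p i k j > 0`. -/
def diagram (A : SymAssocScheme X d) (i : Fin (d + 1)) : SimpleGraph (Fin (d + 1)) where
  Adj j k := j ≠ k ∧ 0 < A.p i j k + A.p i k j
  symm := ⟨fun j k h => ⟨h.1.symm, by omega⟩⟩
  loopless := ⟨fun j h => h.1 rfl⟩

end SymAssocScheme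


section ConnAux

open Finset

variable {Y : Type*} [Fintype Y] [DecidableEq Y] (G : SimpleGraph Y) [DecidableRel G.Adj]

private lemma conn_pair_count (P Q : Finset Y) :
    ∑ x ∈ P, (G.neighborFinset x ∩ Q).card = ∑ c ∈ Q, (G.neighborFinset c ∩ P).card := by
  have h : ∀ (R : Finset Y) (x : Y), (G.neighborFinset x ∩ R).card
      = ∑ c ∈ R, if G.Adj x c then 1 else 0 := by
    intro R x
    have : G.neighborFinset x ∩ R = R.filter (fun c => G.Adj x c) := by
      ext c; simp [SimpleGraph.mem_neighborFinset, and_comm]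
    rw [this, ← Finset.sum_filter]; simp
  calc ∑ x ∈ P, (G.neighborFinset x ∩ Q).card = ∑ x ∈ P, ∑ c ∈ Q, if G.Adj x c then 1 else 0 :=
        Finset.sum_congr rfl fun x _ => h Q x
    _ = ∑ c ∈ Q, ∑ x ∈ P, if G.Adj x c then 1 else 0 := Finset.sum_comm
    _ = ∑ c ∈ Q, (G.neighborFinset c ∩ P).card := by
        refine Finset.sum_congr rfl fun c _ => ?_
        rw [h P c]
        refine Finset.sum_congr rfl fun x _ => ?_
        simp [G.adj_comm]

/-- Moore-type bound  for diameter-two regular graphs. -/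
private lemma conn_moore (v : ℕ) (hreg : ∀ x, (G.neighborFinset x).card = v)
    (hcommon : ∀ x y, x ≠ y → ¬ G.Adj x y → ∃ z, G.Adj x z ∧ G.Adj z y)
    (a : Y) : Fintype.card Y ≤ v * v + 1 := by
  classical
  have hcover : (Finset.univ : Finset Y) ⊆
      insert a (G.neighborFinset a ∪ (G.neighborFinset a).biUnion
        (fun c => (G.neighborFinset c).erase a)) := by
    intro x _
    by_cases hxa : x = a
    · simp [hxa]
    · by_cases hadj : G.Adj a x
      · simp [SimpleGraph.mem_neighborFinset, hadj]
      · obtain ⟨z, hz1, hz2⟩ := hcommon a x (Ne.symm hxa) hadj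
        simp only [mem_insert, mem_union, mem_biUnion, SimpleGraph.mem_neighborFinset]
        right; right
        exact ⟨z, hz1, by simp [SimpleGraph.mem_neighborFinset, hz2, hxa]⟩
  have h1 : Fintype.card Y ≤ 1 + (v + v * (v - 1)) := by
    rw [← Finset.card_univ]
    refine le_trans (Finset.card_le_card hcover) ?_
    refine le_trans (Finset.card_insert_le _ _) ?_
    rw [add_comm]
    refine Nat.add_le_add_left ?_ 1
    refine le_trans (Finset.card_union_le _ _) ?_
    refine Nat.add_le_add (le_of_eq (hreg a)) ?_
    refine le_trans (Finset.card_biUnion_le) ?_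
    have hdeg : G.degree a = v := by rw [← hreg a]; rfl
    refine le_trans (Finset.sum_le_card_nsmul _ _ (v - 1) ?_) ?_
    swap
    · simp only [smul_eq_mul]
      rw [show (G.neighborFinset a).card = v from hreg a, mul_comm]
    intro c hc
    rw [SimpleGraph.mem_neighborFinset] at hc
    have ha : a ∈ G.neighborFinset c := by
      rw [SimpleGraph.mem_neighborFinset]; exact hc.symm
    rw [Finset.card_erase_of_mem ha, hreg c]
  have : 1 + (v + v * (v - 1)) ≤ v * v + 1 := by
    rcases v with _ | w
    · simp
    · have : (w + 1) * (w + 1 - 1) = (w+1) * w := rfl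
      rw [this]; ring_nf; omega
  omega

private lemma conn_core (v lam : ℕ)
    (hreg : ∀ x, (G.neighborFinset x).card = v)
    (hlam : ∀ x y, G.Adj x y → (G.neighborFinset x ∩ G.neighborFinset y).card = lam)
    (A B T : Finset Y) (hB : B.Nonempty)
    (hpart : ∀ x : Y, x ∈ A ∨ x ∈ B ∨ x ∈ T)
    (hAB : ∀ x ∈ A, x ∉ B) (hAT : ∀ x ∈ A, x ∉ T) (hBT : ∀ x ∈ B, x ∉ T)
    (hnoedge : ∀ a ∈ A, ∀ b ∈ B, ¬ G.Adj a b)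
    (hcross : ∀ a ∈ A, ∀ b ∈ B, ∃ z ∈ T, G.Adj a z ∧ G.Adj z b)
    (hsv : T.card < v)
    (hbig : v * T.card + 2 < A.card + B.card + v + T.card)
    (x₀ : Y) (hx₀ : x₀ ∈ A) (c₀ : Y) (hS : G.neighborFinset x₀ ∩ T = {c₀}) : False := by
  have hc₀T : c₀ ∈ T := (Finset.mem_inter.1 (hS ▸ Finset.mem_singleton_self c₀)).2
  have hx₀c₀ : G.Adj x₀ c₀ := by
    have := (Finset.mem_inter.1 (hS ▸ Finset.mem_singleton_self c₀)).1
    rwa [SimpleGraph.mem_neighborFinset] at this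
  -- c₀ is adjacent to everything in B
  have hfull : ∀ y ∈ B, G.Adj c₀ y := by
    intro y hy
    obtain ⟨z, hzT, hz1, hz2⟩ := hcross x₀ hx₀ y hy
    have hz : z ∈ G.neighborFinset x₀ ∩ T := by
      rw [Finset.mem_inter, SimpleGraph.mem_neighborFinset]; exact ⟨hz1, hzT⟩
    rw [hS, Finset.mem_singleton] at hz
    rwa [hz] at hz2
  have hBsubc₀ : B ⊆ G.neighborFinset c₀ := by
    intro y hy; rw [SimpleGraph.mem_neighborFinset]; exact hfull y hy
  -- |B| + |T| ≥ v + 1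
  have hBcard : v + 1 ≤ B.card + T.card := by
    obtain ⟨y, hy⟩ := hB
    have hsub : G.neighborFinset y ⊆ (B.erase y) ∪ T := by
      intro z hz
      rw [SimpleGraph.mem_neighborFinset] at hz
      rcases hpart z with hzA | hzB | hzT
      · exact absurd hz.symm (hnoedge z hzA y hy)
      · exact Finset.mem_union_left _ (Finset.mem_erase.2 ⟨fun h => G.irrefl (h ▸ hz), hzB⟩)
      · exact Finset.mem_union_right _ hzT
    have h1 : v ≤ (B.erase y).card + T.card := by
      rw [← hreg y]
      exact le_trans (Finset.card_le_card hsub) (Finset.card_union_le _ _)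
    have h2 : (B.erase y).card + 1 = B.card := by
      rw [Finset.card_erase_of_mem hy]
      have : 1 ≤ B.card := Finset.card_pos.2 ⟨y, hy⟩
      omega
    omega
  -- generic: for c ∈ T, |N(c)∩A| + |N(c)∩B| ≤ v
  have hABc : ∀ c : Y, (G.neighborFinset c ∩ A).card + (G.neighborFinset c ∩ B).card ≤ v := by
    intro c
    rw [← hreg c]
    rw [← Finset.card_union_of_disjoint]
    · exact Finset.card_le_card (Finset.union_subset (Finset.inter_subset_left)
        (Finset.inter_subset_left))
    · rw [Finset.disjoint_left]
      intro z hz1 hz2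
      exact hAB z (Finset.mem_inter.1 hz1).2 (Finset.mem_inter.1 hz2).2
  by_cases hEx : ∃ y ∈ B, (G.neighborFinset y ∩ T).card + 1 ≤ T.card
  · -- Case II.1a
    obtain ⟨y, hyB, hk⟩ := hEx
    have hc₀y : c₀ ∈ G.neighborFinset y ∩ T := by
      rw [Finset.mem_inter, SimpleGraph.mem_neighborFinset]
      exact ⟨(hfull y hyB).symm, hc₀T⟩
    -- A is covered by neighbourhoods of N(y)∩T
    have hcov : A ⊆ (G.neighborFinset y ∩ T).biUnion (fun c => G.neighborFinset c ∩ A) := by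
      intro x hx
      obtain ⟨z, hzT, hz1, hz2⟩ := hcross x hx y hyB
      refine Finset.mem_biUnion.2 ⟨z, ?_, ?_⟩
      · rw [Finset.mem_inter, SimpleGraph.mem_neighborFinset]; exact ⟨hz2.symm, hzT⟩
      · rw [Finset.mem_inter, SimpleGraph.mem_neighborFinset]; exact ⟨hz1.symm, hx⟩
    have hAle : A.card ≤ ∑ c ∈ G.neighborFinset y ∩ T, (G.neighborFinset c ∩ A).card :=
      le_trans (Finset.card_le_card hcov) Finset.card_biUnion_le
    have hsplit : ∑ c ∈ G.neighborFinset y ∩ T, (G.neighborFinset c ∩ A).card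
        = (G.neighborFinset c₀ ∩ A).card
          + ∑ c ∈ (G.neighborFinset y ∩ T).erase c₀, (G.neighborFinset c ∩ A).card :=
      (Finset.add_sum_erase _ _ hc₀y).symm
    have hone : ∀ c ∈ (G.neighborFinset y ∩ T).erase c₀, (G.neighborFinset c ∩ A).card ≤ v - 1 := by
      intro c hc
      have hcy : G.Adj c y := by
        have := (Finset.mem_inter.1 (Finset.mem_of_mem_erase hc)).1
        rw [SimpleGraph.mem_neighborFinset] at this; exact this.symm
      have hins : insert y (G.neighborFinset c ∩ A) ⊆ G.neighborFinset c := by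
        intro z hz
        rcases Finset.mem_insert.1 hz with rfl | hz
        · rw [SimpleGraph.mem_neighborFinset]; exact hcy
        · exact (Finset.mem_inter.1 hz).1
      have hyni : y ∉ G.neighborFinset c ∩ A := by
        intro h; exact hAB y (Finset.mem_inter.1 h).2 hyB
      have := Finset.card_le_card hins
      rw [Finset.card_insert_of_notMem hyni, hreg c] at this
      omega
    have hsum2 : ∑ c ∈ (G.neighborFinset y ∩ T).erase c₀, (G.neighborFinset c ∩ A).card
        ≤ ((G.neighborFinset y ∩ T).erase c₀).card * (v - 1) := by
      refine le_trans (Finset.sum_le_card_nsmul _ _ (v-1) hone) (by simp)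
    have hBle : B.card ≤ (G.neighborFinset c₀ ∩ B).card :=
      Finset.card_le_card (fun z hz => Finset.mem_inter.2 ⟨hBsubc₀ hz, hz⟩)
    -- numerics
    have hkcard : 1 ≤ (G.neighborFinset y ∩ T).card := Finset.card_pos.2 ⟨c₀, hc₀y⟩
    have herase : ((G.neighborFinset y ∩ T).erase c₀).card
        = (G.neighborFinset y ∩ T).card - 1 := Finset.card_erase_of_mem hc₀y
    obtain ⟨w, rfl⟩ : ∃ w, v = w + 1 := ⟨v - 1, by omega⟩
    set m := ((G.neighborFinset y ∩ T).erase c₀).card with hm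
    have hms : m + 2 ≤ T.card := by omega
    have hprod : w * (m + 2) ≤ w * T.card := Nat.mul_le_mul_left _ hms
    have hABc₀ := hABc c₀
    have hvsimp : w + 1 - 1 = w := by omega
    rw [hvsimp] at hsum2
    have hgoal : A.card + B.card + (w+1) + T.card ≤ (w+1) * T.card + 2 := by
      have hA2 : A.card ≤ (G.neighborFinset c₀ ∩ A).card + m * w := by
        calc A.card ≤ _ := hAle
          _ = _ := hsplit
          _ ≤ (G.neighborFinset c₀ ∩ A).card + m * w := by
              exact Nat.add_le_add_left hsum2 _
      have e1 : w * (m+2) = w*m + 2*w := by ring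
      have e2 : (w+1) * T.card = w * T.card + T.card := by ring
      have e3 : m * w = w * m := by ring
      omega
    omega
  · -- Case II.1b
    push_neg at hEx
    -- every y ∈ B sees all of T
    have hTy : ∀ y ∈ B, G.neighborFinset y ∩ T = T := by
      intro y hy
      exact Finset.eq_of_subset_of_card_le Finset.inter_subset_right (by
        have := hEx y hy; omega)
    have hadjTB : ∀ c ∈ T, ∀ y ∈ B, G.Adj c y := by
      intro c hc y hy
      have : c ∈ G.neighborFinset y ∩ T := by rw [hTy y hy]; exact hc
      have := (Finset.mem_inter.1 this).1
      rw [SimpleGraph.mem_neighborFinset] at this; exact this.symm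
    -- |N(c)∩A| + |B| ≤ v for c ∈ T
    have haB : ∀ c ∈ T, (G.neighborFinset c ∩ A).card + B.card ≤ v := by
      intro c hc
      have h1 : B.card ≤ (G.neighborFinset c ∩ B).card :=
        Finset.card_le_card (fun z hz => Finset.mem_inter.2
          ⟨by rw [SimpleGraph.mem_neighborFinset]; exact hadjTB c hc z hz, hz⟩)
      have := hABc c
      omega
    -- A is covered by the neighbourhoods of T
    obtain ⟨y₁, hy₁⟩ := hB
    have hAcov : A ⊆ T.biUnion (fun c => G.neighborFinset c ∩ A) := by
      intro x hx
      obtain ⟨z, hzT, hz1, hz2⟩ := hcross x hx y₁ hy₁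
      exact Finset.mem_biUnion.2 ⟨z, hzT, by
        rw [Finset.mem_inter, SimpleGraph.mem_neighborFinset]; exact ⟨hz1.symm, hx⟩⟩
    have hAle : A.card ≤ ∑ c ∈ T, (G.neighborFinset c ∩ A).card :=
      le_trans (Finset.card_le_card hAcov) Finset.card_biUnion_le
    -- |A| ≥ v
    have hAv : v ≤ A.card := by
      have hsub : G.neighborFinset x₀ ⊆ (A.erase x₀) ∪ {c₀} := by
        intro z hz
        have hzadj : G.Adj x₀ z := by rwa [SimpleGraph.mem_neighborFinset] at hz
        rcases hpart z with hzA | hzB | hzT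
        · exact Finset.mem_union_left _ (Finset.mem_erase.2
            ⟨fun h => G.irrefl (h ▸ hzadj), hzA⟩)
        · exact absurd hzadj (hnoedge x₀ hx₀ z hzB)
        · have : z ∈ G.neighborFinset x₀ ∩ T := Finset.mem_inter.2 ⟨hz, hzT⟩
          rw [hS] at this
          exact Finset.mem_union_right _ this
      have h1 := Finset.card_le_card hsub
      rw [hreg x₀] at h1
      have h2 := Finset.card_union_le (A.erase x₀) ({c₀} : Finset Y)
      rw [Finset.card_erase_of_mem hx₀, Finset.card_singleton] at h2
      have : 1 ≤ A.card := Finset.card_pos.2 ⟨x₀, hx₀⟩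
      omega
    by_cases hv2 : v = T.card + 1
    · -- b3 : the λ-argument
      obtain ⟨y, hyB⟩ : ∃ y, y ∈ B := ⟨y₁, hy₁⟩
      have hTsubNy : T ⊆ G.neighborFinset y := by rw [← hTy y hyB]; exact Finset.inter_subset_left
      -- N(y) = T ∪ (N(y) ∩ B), disjointly
      have hNy : G.neighborFinset y = T ∪ (G.neighborFinset y ∩ B) := by
        apply Finset.Subset.antisymm
        · intro z hz
          have hzadj : G.Adj y z := by rwa [SimpleGraph.mem_neighborFinset] at hz
          rcases hpart z with hzA | hzB | hzT
          · exact absurd hzadj.symm (hnoedge z hzA y hyB)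
          · exact Finset.mem_union_right _ (Finset.mem_inter.2 ⟨hz, hzB⟩)
          · exact Finset.mem_union_left _ hzT
        · exact Finset.union_subset hTsubNy Finset.inter_subset_left
      have hdisj : Disjoint T (G.neighborFinset y ∩ B) := by
        rw [Finset.disjoint_left]
        intro z hz1 hz2
        exact hBT z (Finset.mem_inter.1 hz2).2 hz1
      have hcard1 : (G.neighborFinset y ∩ B).card = 1 := by
        have := hreg y
        rw [hNy, Finset.card_union_of_disjoint hdisj] at this
        omega
      obtain ⟨y', hy'⟩ := Finset.card_eq_one.1 hcard1
      have hy'mem : y' ∈ G.neighborFinset y ∩ B := hy' ▸ Finset.mem_singleton_self y'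
      have hyy' : G.Adj y y' := by
        have := (Finset.mem_inter.1 hy'mem).1
        rwa [SimpleGraph.mem_neighborFinset] at this
      have hy'B : y' ∈ B := (Finset.mem_inter.1 hy'mem).2
      -- λ ≥ |T|
      have hlamS : T.card ≤ lam := by
        rw [← hlam y y' hyy']
        refine Finset.card_le_card ?_
        intro c hc
        rw [Finset.mem_inter, SimpleGraph.mem_neighborFinset, SimpleGraph.mem_neighborFinset]
        exact ⟨(hadjTB c hc y hyB).symm, (hadjTB c hc y' hy'B).symm⟩
      -- the common neighbourhood of y and c₀ is all of N(y) \ {c₀}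
      have hyc₀ : G.Adj y c₀ := (hadjTB c₀ hc₀T y hyB).symm
      have hc₀Ny : c₀ ∈ G.neighborFinset y := by
        rw [SimpleGraph.mem_neighborFinset]; exact hyc₀
      have hsubE : G.neighborFinset y ∩ G.neighborFinset c₀ ⊆ (G.neighborFinset y).erase c₀ := by
        intro z hz
        obtain ⟨hz1, hz2⟩ := Finset.mem_inter.1 hz
        refine Finset.mem_erase.2 ⟨?_, hz1⟩
        intro h
        subst h
        exact G.irrefl (by rwa [SimpleGraph.mem_neighborFinset] at hz2)
      have hEq : G.neighborFinset y ∩ G.neighborFinset c₀ = (G.neighborFinset y).erase c₀ := by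
        refine Finset.eq_of_subset_of_card_le hsubE ?_
        rw [Finset.card_erase_of_mem hc₀Ny, hreg y, hlam y c₀ hyc₀]
        omega
      -- now N(c₀) contains T\{c₀}, B and x₀
      have hW : (T.erase c₀) ∪ B ∪ {x₀} ⊆ G.neighborFinset c₀ := by
        intro z hz
        rcases Finset.mem_union.1 hz with hz | hz
        · rcases Finset.mem_union.1 hz with hz | hz
          · obtain ⟨hzc₀, hzT⟩ := Finset.mem_erase.1 hz
            have : z ∈ (G.neighborFinset y).erase c₀ :=
              Finset.mem_erase.2 ⟨hzc₀, hTsubNy hzT⟩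
            rw [← hEq] at this
            exact (Finset.mem_inter.1 this).2
          · exact hBsubc₀ hz
        · rw [Finset.mem_singleton] at hz
          subst hz
          rw [SimpleGraph.mem_neighborFinset]
          exact hx₀c₀.symm
      have hd1 : Disjoint (T.erase c₀) B := by
        rw [Finset.disjoint_left]
        intro z hz1 hz2
        exact hBT z hz2 (Finset.mem_of_mem_erase hz1)
      have hd2 : Disjoint ((T.erase c₀) ∪ B) ({x₀} : Finset Y) := by
        rw [Finset.disjoint_right]
        intro z hz1 hz2
        rw [Finset.mem_singleton] at hz1
        subst hz1
        rcases Finset.mem_union.1 hz2 with hz | hz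
        · exact hAT z hx₀ (Finset.mem_of_mem_erase hz)
        · exact hAB z hx₀ hz
      have hWcard := Finset.card_le_card hW
      rw [hreg c₀, Finset.card_union_of_disjoint hd2, Finset.card_union_of_disjoint hd1,
        Finset.card_erase_of_mem hc₀T, Finset.card_singleton] at hWcard
      have hs1 : 1 ≤ T.card := Finset.card_pos.2 ⟨c₀, hc₀T⟩
      omega
    · -- v ≥ T.card + 2
      have hv2' : T.card + 2 ≤ v := by omega
      by_cases hs2 : T.card ≤ 2
      · -- b1
        have hone : ∀ c ∈ T, (G.neighborFinset c ∩ A).card ≤ T.card - 1 := by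
          intro c hc
          have := haB c hc
          omega
        have hA_ub : A.card ≤ T.card * (T.card - 1) := by
          refine le_trans hAle (le_trans (Finset.sum_le_card_nsmul _ _ _ hone) (by simp))
        have : T.card * (T.card - 1) ≤ 2 * 1 :=
          Nat.mul_le_mul hs2 (by omega)
        have hs1 : 1 ≤ T.card := Finset.card_pos.2 ⟨c₀, hc₀T⟩
        omega
      · -- b2
        push_neg at hs2
        have hsum : ∑ c ∈ T, (G.neighborFinset c ∩ A).card + T.card * B.card ≤ T.card * v := by
          have h1 : ∑ c ∈ T, ((G.neighborFinset c ∩ A).card + B.card) ≤ ∑ _c ∈ T, v :=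
            Finset.sum_le_sum haB
          rw [Finset.sum_add_distrib, Finset.sum_const, smul_eq_mul] at h1
          rw [Finset.sum_const, smul_eq_mul] at h1
          omega
        have hA2 : A.card + T.card * B.card ≤ T.card * v := le_trans (by omega) hsum
        -- arithmetic contradiction
        obtain ⟨u, hu3, huv⟩ : ∃ u, 3 ≤ u ∧ v + 1 = u + T.card :=
          ⟨v + 1 - T.card, by omega, by omega⟩
        have hBu : u ≤ B.card := by omega
        have hp1 : (T.card - 1) * u ≤ (T.card - 1) * B.card := Nat.mul_le_mul_left _ hBu
        have hp2 : (T.card - 2) * 3 ≤ (T.card - 2) * u := Nat.mul_le_mul_left _ hu3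
        have e1 : (T.card - 1) * B.card + B.card = T.card * B.card := by
          have : T.card - 1 + 1 = T.card := by omega
          calc (T.card - 1) * B.card + B.card = (T.card - 1 + 1) * B.card := by ring
            _ = T.card * B.card := by rw [this]
        have e2 : (T.card - 1) * u + u = T.card * u := by
          have : T.card - 1 + 1 = T.card := by omega
          calc (T.card - 1) * u + u = (T.card - 1 + 1) * u := by ring
            _ = T.card * u := by rw [this]
        have e3 : (T.card - 2) * u + 2 * u = T.card * u := by
          have : T.card - 2 + 2 = T.card := by omega
          calc (T.card - 2) * u + 2 * u = (T.card - 2 + 2) * u := by ring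
            _ = T.card * u := by rw [this]
        have e4 : T.card * (v + 1) = T.card * v + T.card := by ring
        have e5 : T.card * (v+1) = T.card * u + T.card * T.card := by
          rw [huv]; ring
        have e6 : v * T.card = T.card * v := by ring
        have e7 : (T.card - 2) * 3 = 3 * T.card - 6 := by omega
        omega

private lemma conn_key (v lam : ℕ)
    (hreg : ∀ x, (G.neighborFinset x).card = v)
    (hlam : ∀ x y, G.Adj x y → (G.neighborFinset x ∩ G.neighborFinset y).card = lam)
    (hcommon : ∀ x y, x ≠ y → ¬ G.Adj x y → ∃ z, G.Adj x z ∧ G.Adj z y)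
    (A B T : Finset Y) (hA : A.Nonempty) (hB : B.Nonempty)
    (hpart : ∀ x : Y, x ∈ A ∨ x ∈ B ∨ x ∈ T)
    (hAB : ∀ x ∈ A, x ∉ B) (hAT : ∀ x ∈ A, x ∉ T) (hBT : ∀ x ∈ B, x ∉ T)
    (hnoedge : ∀ a ∈ A, ∀ b ∈ B, ¬ G.Adj a b)
    (hsv : T.card < v)
    (hbig : v * T.card + 2 < A.card + B.card + v + T.card) : False := by
  have hcross : ∀ a ∈ A, ∀ b ∈ B, ∃ z ∈ T, G.Adj a z ∧ G.Adj z b := by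
    intro a ha b hb
    have hne : a ≠ b := fun h => hAB a ha (h ▸ hb)
    obtain ⟨z, hz1, hz2⟩ := hcommon a b hne (hnoedge a ha b hb)
    refine ⟨z, ?_, hz1, hz2⟩
    rcases hpart z with hzA | hzB | hzT
    · exact absurd hz2 (hnoedge z hzA b hb)
    · exact absurd hz1 (hnoedge a ha z hzB)
    · exact hzT
  by_cases hall : ∀ x, (x ∈ A ∨ x ∈ B) → 2 ≤ (G.neighborFinset x ∩ T).card
  · -- every vertex outside T has ≥ 2 neighbours in T
    obtain ⟨a, ha⟩ := hA
    have hs2 : 2 ≤ T.card :=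
      le_trans (hall a (Or.inl ha)) (Finset.card_le_card Finset.inter_subset_right)
    have hup : ∑ c ∈ T, (G.neighborFinset c ∩ (A ∪ B)).card ≤ T.card * v := by
      refine le_trans (Finset.sum_le_card_nsmul _ _ v ?_) (by simp)
      intro c _
      exact le_trans (Finset.card_le_card Finset.inter_subset_left) (le_of_eq (hreg c))
    have hlow : 2 * (A ∪ B).card ≤ ∑ x ∈ A ∪ B, (G.neighborFinset x ∩ T).card := by
      have := Finset.card_nsmul_le_sum (A ∪ B) (fun x => (G.neighborFinset x ∩ T).card) 2
        (fun x hx => hall x (Finset.mem_union.1 hx))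
      simpa [mul_comm] using this
    have hcnt := conn_pair_count G (A ∪ B) T
    have hcardU : (A ∪ B).card = A.card + B.card := by
      rw [Finset.card_union_of_disjoint]
      rw [Finset.disjoint_left]
      exact hAB
    -- 2(|A|+|B|) ≤ |T| v, contradiction
    have h2 : 2 * (A.card + B.card) ≤ T.card * v := by
      rw [← hcardU]
      exact le_trans hlow (le_trans (le_of_eq hcnt) hup)
    -- (v-2)(s-2) ≥ 0 gives the contradiction
    have hvs : T.card + 1 ≤ v := hsv
    have hfact0 : ∀ s w : ℕ, 2 ≤ s → 2 ≤ w → (w - 2) * (s - 2) + 2 * w + 2 * s = w * s + 4 := by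
      intro s w hs hw
      obtain ⟨v2, rfl⟩ : ∃ v2, w = v2 + 2 := ⟨w - 2, by omega⟩
      obtain ⟨s2, rfl⟩ : ∃ s2, s = s2 + 2 := ⟨s - 2, by omega⟩
      simp only [Nat.add_sub_cancel]
      ring
    have hfact := hfact0 T.card v hs2 (by omega)
    have e1 : T.card * v = v * T.card := by ring
    omega
  · push_neg at hall
    obtain ⟨x₀, hx₀AB, hx₀car⟩ := hall
    have hx1 : 1 ≤ (G.neighborFinset x₀ ∩ T).card := by
      rcases hx₀AB with hx₀A | hx₀B
      · obtain ⟨b, hb⟩ := hB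
        obtain ⟨z, hzT, hz1, hz2⟩ := hcross x₀ hx₀A b hb
        refine Finset.card_pos.2 ⟨z, ?_⟩
        rw [Finset.mem_inter, SimpleGraph.mem_neighborFinset]
        exact ⟨hz1, hzT⟩
      · obtain ⟨a, ha⟩ := hA
        obtain ⟨z, hzT, hz1, hz2⟩ := hcross a ha x₀ hx₀B
        refine Finset.card_pos.2 ⟨z, ?_⟩
        rw [Finset.mem_inter, SimpleGraph.mem_neighborFinset]
        exact ⟨hz2.symm, hzT⟩
    have hcard1 : (G.neighborFinset x₀ ∩ T).card = 1 := by omega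
    obtain ⟨c₀, hc₀⟩ := Finset.card_eq_one.1 hcard1
    rcases hx₀AB with hx₀A | hx₀B
    · exact conn_core G v lam hreg hlam A B T hB hpart hAB hAT hBT hnoedge hcross hsv hbig
        x₀ hx₀A c₀ hc₀
    · refine conn_core G v lam hreg hlam B A T hA (fun x => by rcases hpart x with h|h|h <;> tauto)
        (fun x hx hx' => hAB x hx' hx) hBT hAT
        (fun b hb a ha hadj => hnoedge a ha b hb hadj.symm)
        (fun b hb a ha => ?_) hsv (by omega) x₀ hx₀B c₀ hc₀
      obtain ⟨z, hzT, hz1, hz2⟩ := hcross a ha b hb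
      exact ⟨z, hzT, hz2.symm, hz1.symm⟩

end ConnAux

open SymAssocScheme in
/-- Theorem 5.8: let `Γ = (X, R_1)` be a connected basis relation of valency
`v_1 = p_{11}^0` and diameter two. If `|X| > v_1 (t - 1) + 2` and `t ≠ v_1`, then
`Γ` has vertex connectivity at least `t + 1`: every disconnecting set has size at
least `t + 1`. -/
theorem connectivity_diam_two {X : Type*} [Fintype X] {d : ℕ} (hd : 0 < d)
    (A : SymAssocScheme X d) (hconn : (A.graph 1).Connected)
    (hdiam : (A.graph 1).diam = 2)
    (t : ℕ) (ht : 0 < t) (htv : t ≠ A.p 1 1 0)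
    (hcard : A.p 1 1 0 * (t - 1) + 2 < Fintype.card X) :
    ∀ T : Set X, ¬ ((A.graph 1).induce Tᶜ).Connected → t + 1 ≤ T.ncard := by
  classical
  intro T hndisc
  by_contra hcon
  push_neg at hcon
  have hst : T.ncard ≤ t := by omega
  set G := A.graph 1 with hG
  set v := A.p 1 1 0 with hv
  have hne10 : (1 : Fin (d+1)) ≠ 0 := by
    intro h
    have := Fin.val_eq_of_eq h
    simp [Fin.val_one, Nat.mod_eq_of_lt (show 1 < d + 1 by omega)] at this
  have hR1ne : ∀ a b : X, A.R 1 a b → a ≠ b := by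
    intro a b h heq
    subst heq
    obtain ⟨i, hi, huniq⟩ := A.R_unique a a
    have h0 : A.R 0 a a := (A.R_zero a a).2 rfl
    exact hne10 ((huniq 1 h).trans (huniq 0 h0).symm)
  have hadj : ∀ a b : X, G.Adj a b ↔ A.R 1 a b := by
    intro a b
    constructor
    · exact fun h => (show a ≠ b ∧ A.R 1 a b from h).2
    · exact fun h => (show a ≠ b ∧ A.R 1 a b from ⟨hR1ne a b h, h⟩)
  -- neighbourhoods
  have hnbr : ∀ x : X, (G.neighborSet x) = {c : X | A.R 1 x c ∧ A.R 1 c x} := by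
    intro x
    ext c
    simp only [SimpleGraph.mem_neighborSet, Set.mem_setOf_eq, hadj]
    exact ⟨fun h => ⟨h, A.R_symm 1 x c h⟩, fun h => h.1⟩
  have hreg : ∀ x : X, (G.neighborFinset x).card = v := by
    intro x
    have h1 : (G.neighborSet x).ncard = v := by
      rw [hnbr x]
      exact A.p_spec 1 1 0 x x ((A.R_zero x x).2 rfl)
    rw [← h1, SimpleGraph.neighborFinset_def, ← Set.ncard_eq_toFinset_card']
  have hlam : ∀ x y : X, G.Adj x y →
      (G.neighborFinset x ∩ G.neighborFinset y).card = A.p 1 1 1 := by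
    intro x y hxy
    have h1 : {c : X | A.R 1 x c ∧ A.R 1 c y}.ncard = A.p 1 1 1 :=
      A.p_spec 1 1 1 x y ((hadj x y).1 hxy)
    have h2 : ((G.neighborFinset x ∩ G.neighborFinset y : Finset X) : Set X)
        = {c : X | A.R 1 x c ∧ A.R 1 c y} := by
      ext c
      simp only [Finset.coe_inter, Set.mem_inter_iff, Finset.mem_coe, SimpleGraph.mem_neighborFinset,
        SimpleGraph.mem_neighborFinset, Set.mem_setOf_eq, hadj]
      constructor
      · exact fun h => ⟨h.1, A.R_symm 1 y c h.2⟩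
      · exact fun h => ⟨h.1, A.R_symm 1 c y h.2⟩
    rw [← h1, ← h2, Set.ncard_coe_finset]
  have hcommon : ∀ x y : X, x ≠ y → ¬ G.Adj x y → ∃ z, G.Adj x z ∧ G.Adj z y := by
    intro x y hne hnadj
    have hdne : G.ediam ≠ ⊤ := SimpleGraph.ediam_ne_top_of_diam_ne_zero (by rw [hdiam]; omega)
    have hd2 : G.dist x y ≤ 2 := hdiam ▸ SimpleGraph.dist_le_diam hdne
    have hreach : G.Reachable x y := hconn x y
    have hd0 : G.dist x y ≠ 0 := by
      intro h
      rcases SimpleGraph.dist_eq_zero_iff_eq_or_not_reachable.1 h with h' | h'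
      · exact hne h'
      · exact h' hreach
    have hd1 : G.dist x y ≠ 1 := by
      intro h
      exact hnadj (SimpleGraph.dist_eq_one_iff_adj.1 h)
    have hdist : G.dist x y = 2 := by omega
    obtain ⟨w, hw⟩ := hreach.exists_walk_length_eq_dist
    rw [hdist] at hw
    match w, hw with
    | SimpleGraph.Walk.cons h1 (SimpleGraph.Walk.cons h2 SimpleGraph.Walk.nil), _ =>
      exact ⟨_, h1, h2⟩
  obtain ⟨a0⟩ : Nonempty X := hconn.nonempty
  have hmoore := conn_moore G v hreg hcommon a0
  rcases Nat.lt_or_ge t v with htlt | htge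
  swap
  · -- t ≥ v: then t > v and the Moore bound gives a contradiction
    have htgt : v < t := lt_of_le_of_ne htge (fun h => htv h.symm)
    have h1 : v * v ≤ v * (t - 1) := Nat.mul_le_mul_left _ (by omega)
    omega
  -- main case : t < v
  by_cases hTu : T = Set.univ
  · -- complement is empty
    have hTn : T.ncard = Fintype.card X := by
      rw [hTu, Set.ncard_univ, Nat.card_eq_fintype_card]
    have hv1 : 1 ≤ v := by omega
    have h1 : t - 1 ≤ v * (t - 1) := Nat.le_mul_of_pos_left _ (by omega)
    omega
  obtain ⟨x₀, hx₀T⟩ : ∃ x, x ∉ T := Set.ne_univ_iff_exists_notMem T |>.1 hTu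
  have hx₀c : x₀ ∈ Tᶜ := hx₀T
  -- the component of x₀ and the rest
  set Aset : Set X := {y : X | ∃ hy : y ∈ Tᶜ, (G.induce Tᶜ).Reachable ⟨x₀, hx₀c⟩ ⟨y, hy⟩}
    with hAset
  have hx₀A : x₀ ∈ Aset := ⟨hx₀c, SimpleGraph.Reachable.refl _⟩
  have hAsub : Aset ⊆ Tᶜ := fun y hy => hy.1
  set Bset : Set X := Tᶜ \ Aset with hBset
  -- B is nonempty
  obtain ⟨y₀, hy₀B⟩ : ∃ y, y ∈ Bset := by
    rw [SimpleGraph.connected_iff] at hndisc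
    push_neg at hndisc
    have hne : Nonempty ↥(Tᶜ) := ⟨⟨x₀, hx₀c⟩⟩
    obtain ⟨u, w, huw⟩ : ∃ u w : ↥(Tᶜ), ¬ (G.induce Tᶜ).Reachable u w := by
      by_contra hc
      push_neg at hc
      exact (not_isEmpty_iff.2 hne) (hndisc hc)
    by_cases hu : (u : X) ∈ Aset
    · by_cases hw : (w : X) ∈ Aset
      · exfalso
        obtain ⟨hu1, hu2⟩ := hu
        obtain ⟨hw1, hw2⟩ := hw
        have eu : (⟨(u : X), hu1⟩ : ↥(Tᶜ)) = u := Subtype.ext rfl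
        have ew : (⟨(w : X), hw1⟩ : ↥(Tᶜ)) = w := Subtype.ext rfl
        rw [eu] at hu2
        rw [ew] at hw2
        exact huw (hu2.symm.trans hw2)
      · exact ⟨w, ⟨w.prop, hw⟩⟩
    · exact ⟨u, ⟨u.prop, hu⟩⟩
  -- no edges between A and B
  have hnoedgeS : ∀ a ∈ Aset, ∀ b ∈ Bset, ¬ G.Adj a b := by
    intro a ha b hb hab
    obtain ⟨haT, hreach⟩ := ha
    have hbT : b ∈ Tᶜ := hb.1
    have hadj' : (G.induce Tᶜ).Adj ⟨a, haT⟩ ⟨b, hbT⟩ := hab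
    exact hb.2 ⟨hbT, hreach.trans hadj'.reachable⟩
  -- pass to finsets
  have hTfin : T.Finite := Set.toFinite T
  have hAfin : Aset.Finite := Set.toFinite _
  have hBfin : Bset.Finite := Set.toFinite _
  set Tf := hTfin.toFinset with hTf
  set Af := hAfin.toFinset with hAf
  set Bf := hBfin.toFinset with hBf
  have hTcard : Tf.card = T.ncard := (Set.ncard_eq_toFinset_card T hTfin).symm
  have hmemT : ∀ x, x ∈ Tf ↔ x ∈ T := fun x => Set.Finite.mem_toFinset _
  have hmemA : ∀ x, x ∈ Af ↔ x ∈ Aset := fun x => Set.Finite.mem_toFinset _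
  have hmemB : ∀ x, x ∈ Bf ↔ x ∈ Bset := fun x => Set.Finite.mem_toFinset _
  have hpart : ∀ x : X, x ∈ Af ∨ x ∈ Bf ∨ x ∈ Tf := by
    intro x
    rw [hmemA, hmemB, hmemT]
    by_cases hxT : x ∈ T
    · exact Or.inr (Or.inr hxT)
    · by_cases hxA : x ∈ Aset
      · exact Or.inl hxA
      · exact Or.inr (Or.inl ⟨hxT, hxA⟩)
  have hABf : ∀ x ∈ Af, x ∉ Bf := by
    intro x hx hx'
    exact ((hmemB x).1 hx').2 ((hmemA x).1 hx)
  have hATf : ∀ x ∈ Af, x ∉ Tf := by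
    intro x hx hx'
    exact (hAsub ((hmemA x).1 hx)) ((hmemT x).1 hx')
  have hBTf : ∀ x ∈ Bf, x ∉ Tf := by
    intro x hx hx'
    exact ((hmemB x).1 hx).1 ((hmemT x).1 hx')
  have hnoedge : ∀ a ∈ Af, ∀ b ∈ Bf, ¬ G.Adj a b := by
    intro a ha b hb
    exact hnoedgeS a ((hmemA a).1 ha) b ((hmemB b).1 hb)
  -- cardinalities
  have hsv : Tf.card < v := by omega
  have huniv : Af ∪ Bf ∪ Tf = Finset.univ := by
    ext x
    simp only [Finset.mem_union, Finset.mem_univ, iff_true]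
    rcases hpart x with h | h | h
    · exact Or.inl (Or.inl h)
    · exact Or.inl (Or.inr h)
    · exact Or.inr h
  have hcards : Af.card + Bf.card + Tf.card = Fintype.card X := by
    rw [← Finset.card_univ, ← huniv]
    rw [Finset.card_union_of_disjoint, Finset.card_union_of_disjoint]
    · rw [Finset.disjoint_left]; exact hABf
    · rw [Finset.disjoint_left]
      intro x hx
      rcases Finset.mem_union.1 hx with h | h
      · exact hATf x h
      · exact hBTf x h
  have hbig : v * Tf.card + 2 < Af.card + Bf.card + v + Tf.card := by
    have h2 : v * (Tf.card - 1) ≤ v * (t - 1) := Nat.mul_le_mul_left _ (by omega)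
    have h3 : v * (Tf.card - 1 + 1) = v * (Tf.card - 1) + v := by ring
    rcases Nat.eq_zero_or_pos Tf.card with h0 | h0
    · rw [h0]; omega
    · have h4 : Tf.card - 1 + 1 = Tf.card := by omega
      rw [h4] at h3
      omega
  exact conn_key G v (A.p 1 1 1) hreg hlam hcommon Af Bf Tf
    ⟨x₀, (hmemA x₀).2 hx₀A⟩ ⟨y₀, (hmemB y₀).2 hy₀B⟩ hpart hABf hATf hBTf hnoedge hsv hbig
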